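/- Fix k ≥ 1 and real numbers a_1, …, a_k with Σ_{j=i}^k a_j > 0 for all 1 ≤ i ≤ k. For n large, let (Q_1^n, …, Q_k^n) be independent with Q_i^n Geometric on ℕ_0 with success probability 1 − ρ_i^{(n)}, where ρ_i^{(n)} = Π_{j=i}^k (1 − a_j/√n). Then (Q_1^n/√n, …, Q_k^n/√n) converges in distribution to ⊗_{i=1}^k Exp(Σ_{j=i}^k a_j) as n → ∞. -/

import Mathlib

open Filter Finset MeasureTheory
open scoped ENNReal Topology

namespace ScaledGeomAux

open ProbabilityTheory

lemma sqrt_nat_atTop : Tendsto (fun n : ℕ => Real.sqrt n) atTop atTop := by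
  rw [tendsto_atTop_atTop]
  intro b
  refine ⟨⌈b ^ 2⌉₊, fun n hn => ?_⟩
  calc b ≤ |b| := le_abs_self b
    _ = Real.sqrt (b ^ 2) := (Real.sqrt_sq_eq_abs b).symm
    _ ≤ Real.sqrt n := Real.sqrt_le_sqrt (by
        calc b ^ 2 ≤ (⌈b ^ 2⌉₊ : ℝ) := Nat.le_ceil _
          _ ≤ n := Nat.cast_le.mpr hn)

lemma expMeasure_singleton {r t : ℝ} : expMeasure r {t} = 0 := by
  rw [expMeasure, gammaMeasure, withDensity_apply _ (measurableSet_singleton t),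
    Measure.restrict_singleton, Real.volume_singleton, zero_smul, lintegral_zero_measure]

lemma expMeasure_tail {r : ℝ} (hr : 0 < r) {t : ℝ} (ht : 0 ≤ t) :
    expMeasure r {y | t ≤ y} = ENNReal.ofReal (Real.exp (-(r * t))) := by
  have hprob : IsProbabilityMeasure (expMeasure r) := isProbabilityMeasure_expMeasure hr
  have hIic : expMeasure r (Set.Iic t) = ENNReal.ofReal (1 - Real.exp (-(r * t))) := by
    rw [expMeasure, gammaMeasure, withDensity_apply _ measurableSet_Iic]
    have h := lintegral_exponentialPDF_eq_antiDeriv hr t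
    rw [if_pos ht] at h
    exact h
  have hIio : expMeasure r (Set.Iio t) = ENNReal.ofReal (1 - Real.exp (-(r * t))) := by
    have h : expMeasure r (Set.Iio t) + expMeasure r {t} = expMeasure r (Set.Iic t) := by
      rw [← measure_union (by simp) (measurableSet_singleton t), Set.Iio_union_right]
    rw [expMeasure_singleton, add_zero] at h
    rw [h, hIic]
  have hset : {y : ℝ | t ≤ y} = (Set.Iio t)ᶜ := by ext y; simp
  have hle : Real.exp (-(r * t)) ≤ 1 := Real.exp_le_one_iff.2 (by nlinarith)
  have hadd : ENNReal.ofReal (Real.exp (-(r * t)))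
      + ENNReal.ofReal (1 - Real.exp (-(r * t))) = 1 := by
    rw [← ENNReal.ofReal_add (Real.exp_pos _).le (by linarith)]
    norm_num
  rw [hset, measure_compl measurableSet_Iio (measure_ne_top _ _), hIio, measure_univ]
  exact ENNReal.sub_eq_of_eq_add ENNReal.ofReal_ne_top hadd.symm

lemma expMeasure_Iio_zero {r : ℝ} : expMeasure r (Set.Iio 0) = 0 := by
  rw [expMeasure, gammaMeasure, withDensity_apply _ measurableSet_Iio]
  exact lintegral_gammaPDF_of_nonpos le_rfl

def tailSet {k : ℕ} (m : Fin k → ℕ) : Set (Fin k → ℕ) := {x | ∀ i, m i ≤ x i}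

lemma measurableSet_tailSet {k : ℕ} (m : Fin k → ℕ) : MeasurableSet (tailSet m) := by
  have h : tailSet m = ⋂ i, (fun x : Fin k → ℕ => x i) ⁻¹' {n | m i ≤ n} := by
    ext x; simp [tailSet]
  rw [h]
  exact MeasurableSet.iInter fun i => measurable_pi_apply i trivial

lemma isPiSystem_tailSet (k : ℕ) : IsPiSystem (Set.range (tailSet (k := k))) := by
  rintro _ ⟨m, rfl⟩ _ ⟨m', rfl⟩ _
  refine ⟨fun i => max (m i) (m' i), ?_⟩
  ext x
  simp [tailSet, forall_and, max_le_iff]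

lemma pi_nat_generateFrom (k : ℕ) :
    (inferInstance : MeasurableSpace (Fin k → ℕ)) =
      MeasurableSpace.generateFrom (Set.range (tailSet (k := k))) := by
  refine le_antisymm ?_ (MeasurableSpace.generateFrom_le ?_)
  · intro s _
    have hsing : ∀ m : Fin k → ℕ,
        MeasurableSet[MeasurableSpace.generateFrom (Set.range (tailSet (k := k)))] {m} := by
      intro m
      have hm : {m} = tailSet m \ ⋃ i : Fin k, tailSet (Function.update m i (m i + 1)) := by
        ext x
        simp only [Set.mem_singleton_iff, Set.mem_diff, Set.mem_iUnion, tailSet,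
          Set.mem_setOf_eq, not_exists]
        constructor
        · rintro rfl
          refine ⟨fun i => le_rfl, fun i h => ?_⟩
          have := h i
          simp at this
        · rintro ⟨h1, h2⟩
          funext i
          by_contra hne
          refine h2 i fun j => ?_
          rcases eq_or_ne j i with rfl | hji
          · simpa using Nat.succ_le_of_lt (lt_of_le_of_ne (h1 j) fun h => hne h.symm)
          · simpa [Function.update_of_ne hji] using h1 j
      rw [hm]
      exact (MeasurableSpace.measurableSet_generateFrom (Set.mem_range_self m)).diff
        (MeasurableSet.iUnion fun i =>
          MeasurableSpace.measurableSet_generateFrom (Set.mem_range_self _))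
    have hs : s = ⋃ x ∈ s, {x} := by simp
    rw [hs]
    exact MeasurableSet.biUnion (Set.to_countable s) fun x _ => hsing x
  · rintro _ ⟨m, rfl⟩
    exact measurableSet_tailSet m

noncomputable def jrho (A : ℕ → ℝ) (k n i : ℕ) : ℝ := ∏ j ∈ Icc i k, (1 - A j / Real.sqrt n)

noncomputable def jc (A : ℕ → ℝ) (k n i : ℕ) : ℝ := -Real.log (jrho A k n i)

lemma jrho_factors_pos (A : ℕ → ℝ) (k i : ℕ) :
    ∀ᶠ n : ℕ in atTop, ∀ j ∈ Icc i k, (0:ℝ) < 1 - A j / Real.sqrt n := by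
  rw [eventually_all_finset]
  intro j _
  have h1 : Tendsto (fun n : ℕ => A j / Real.sqrt n) atTop (𝓝 0) :=
    tendsto_const_nhds.div_atTop sqrt_nat_atTop
  filter_upwards [h1.eventually_lt_const one_pos] with n hn
  linarith

lemma jc_tendsto (A : ℕ → ℝ) (k i : ℕ) :
    Tendsto (fun n : ℕ => Real.sqrt n * jc A k n i) atTop (𝓝 (∑ j ∈ Icc i k, A j)) := by
  have hterm : ∀ j : ℕ,
      Tendsto (fun n : ℕ => -(Real.sqrt n * Real.log (1 - A j / Real.sqrt n))) atTop
        (𝓝 (A j)) := by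
    intro j
    have h := (Real.tendsto_mul_log_one_add_div_atTop (-(A j))).comp sqrt_nat_atTop
    have h2 : Tendsto (fun n : ℕ => Real.sqrt n * Real.log (1 - A j / Real.sqrt n)) atTop
        (𝓝 (-(A j))) := by
      refine h.congr fun n => ?_
      simp only [Function.comp_apply, neg_div, ← sub_eq_add_neg]
    simpa using h2.neg
  have hsum := tendsto_finset_sum (Icc i k) (fun j (_ : j ∈ Icc i k) => hterm j)
  refine hsum.congr' ?_
  filter_upwards [jrho_factors_pos A k i] with n hn
  rw [jc, jrho, Real.log_prod fun j hj => (hn j hj).ne']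
  simp [Finset.mul_sum, mul_neg]

end ScaledGeomAux

open ScaledGeomAux ProbabilityTheory

set_option maxHeartbeats 2000000 in
/-- Heavy traffic limit of the stationary gap distribution of the `k`-station
Jackson network: the scaled independent geometric gaps converge in distribution
to `⊗_{i=1}^k Exp(Σ_{j=i}^k a_j)`. -/
theorem scaled_geometric_tendsto_exponential_finite
    (k : ℕ) (hk : 1 ≤ k) (A : ℕ → ℝ)
    (hA : ∀ i, 1 ≤ i → i ≤ k → 0 < ∑ j ∈ Icc i k, A j)
    {Ω : Type*} [MeasurableSpace Ω] (μ : Measure Ω) [IsProbabilityMeasure μ]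
    (Q : ℕ → ℕ → Ω → ℕ)
    (hmeas : ∀ n i, Measurable (Q n i))
    -- for (large) `n`, `Q n 1, …, Q n k` are independent geometric random
    -- variables on `ℕ₀` with success probabilities `1 − ρ_i^{(n)}`,
    -- `ρ_i^{(n)} = ∏_{j=i}^k (1 − a_j/√n)`:
    (N₀ : ℕ)
    (htail : ∀ n, N₀ ≤ n → ∀ m : ℕ → ℕ,
      μ {ω | ∀ i ∈ Icc 1 k, m i ≤ Q n i ω}
        = ∏ i ∈ Icc 1 k, ENNReal.ofReal
            ((∏ j ∈ Icc i k, (1 - A j / Real.sqrt n)) ^ m i)) :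
    ∀ f : BoundedContinuousFunction (Fin k → ℝ) ℝ,
      Tendsto
        (fun n : ℕ => ∫ ω, f (fun i => (Q n (i + 1) ω : ℝ) / Real.sqrt n) ∂μ)
        atTop
        (nhds (∫ x, f x ∂ (Measure.pi fun i : Fin k =>
          ProbabilityTheory.expMeasure (∑ j ∈ Icc ((i : ℕ) + 1) k, A j)))) := by
  intro f
  classical
  set θ : Fin k → ℝ := fun i => ∑ j ∈ Icc ((i : ℕ) + 1) k, A j with hθdef
  have hθ : ∀ i : Fin k, 0 < θ i := fun i =>
    hA ((i : ℕ) + 1) (by omega) (by have := i.isLt; omega)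
  haveI hPM : ∀ i : Fin k, IsProbabilityMeasure (expMeasure (θ i)) :=
    fun i => isProbabilityMeasure_expMeasure (hθ i)
  set π : Measure (Fin k → ℝ) := Measure.pi fun i : Fin k => expMeasure (θ i) with hπdef
  haveI : IsProbabilityMeasure π := by rw [hπdef]; infer_instance
  have hφ : ∀ n : ℕ, Measurable (fun ω => fun i : Fin k => Q n ((i : ℕ) + 1) ω) :=
    fun n => measurable_pi_lambda _ fun i => hmeas n _
  have hG : ∀ n : ℕ, Measurable
      (fun x : Fin k → ℝ => fun i : Fin k => ⌊θ i * x i / jc A k n ((i : ℕ) + 1)⌋₊) :=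
    fun n => measurable_pi_lambda _ fun i =>
      (((measurable_pi_apply (X := fun _ : Fin k => ℝ) i).const_mul (θ i)).div_const _).nat_floor
  have hc : ∀ i : Fin k,
      Tendsto (fun n : ℕ => Real.sqrt n * jc A k n ((i : ℕ) + 1)) atTop (𝓝 (θ i)) :=
    fun i => jc_tendsto A k ((i : ℕ) + 1)
  -- eventual goodness
  have hgood : ∀ᶠ n : ℕ in atTop, N₀ ≤ n ∧ (0:ℝ) < Real.sqrt n ∧
      ∀ i : Fin k, 0 < jc A k n ((i : ℕ) + 1) ∧ 0 < jrho A k n ((i : ℕ) + 1) := by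
    have h2 : ∀ᶠ n : ℕ in atTop, (0:ℝ) < Real.sqrt n := by
      filter_upwards [eventually_ge_atTop 1] with n hn
      exact Real.sqrt_pos.2 (by exact_mod_cast Nat.lt_of_lt_of_le Nat.zero_lt_one hn)
    have h3 : ∀ᶠ n : ℕ in atTop,
        ∀ i : Fin k, 0 < jc A k n ((i : ℕ) + 1) ∧ 0 < jrho A k n ((i : ℕ) + 1) := by
      refine Filter.eventually_all.2 fun i => ?_
      have hcpos : ∀ᶠ n : ℕ in atTop, 0 < jc A k n ((i : ℕ) + 1) := by
        filter_upwards [(hc i).eventually_const_lt (half_lt_self (hθ i)), h2] with n h hs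
        nlinarith [half_pos (hθ i)]
      have hrpos : ∀ᶠ n : ℕ in atTop, 0 < jrho A k n ((i : ℕ) + 1) := by
        filter_upwards [jrho_factors_pos A k ((i : ℕ) + 1)] with n hn
        exact Finset.prod_pos hn
      filter_upwards [hcpos, hrpos] with n h1 h2 using ⟨h1, h2⟩
    filter_upwards [eventually_ge_atTop N₀, h2, h3] with n a b c using ⟨a, b, c⟩
  -- identification of laws for good n
  have hmap : ∀ n : ℕ, N₀ ≤ n → (0:ℝ) < Real.sqrt n →
      (∀ i : Fin k, 0 < jc A k n ((i : ℕ) + 1) ∧ 0 < jrho A k n ((i : ℕ) + 1)) →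
      μ.map (fun ω => fun i : Fin k => Q n ((i : ℕ) + 1) ω)
        = π.map (fun x => fun i : Fin k => ⌊θ i * x i / jc A k n ((i : ℕ) + 1)⌋₊) := by
    intro n hN hs hgd
    haveI := Measure.isProbabilityMeasure_map (μ := μ) (hφ n).aemeasurable
    haveI := Measure.isProbabilityMeasure_map (μ := π) (hG n).aemeasurable
    refine ext_of_generate_finite _ (pi_nat_generateFrom k) (isPiSystem_tailSet k) ?_
      (by simp)
    rintro _ ⟨m, rfl⟩
    rw [Measure.map_apply (hφ n) (measurableSet_tailSet m),
      Measure.map_apply (hG n) (measurableSet_tailSet m)]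
    set m' : ℕ → ℕ := fun j => if h : 1 ≤ j ∧ j ≤ k then m ⟨j - 1, by omega⟩ else 0 with hm'
    have hsetL : (fun ω => fun i : Fin k => Q n ((i : ℕ) + 1) ω) ⁻¹' tailSet m
        = {ω | ∀ i ∈ Icc 1 k, m' i ≤ Q n i ω} := by
      ext ω
      simp only [Set.mem_preimage, tailSet, Set.mem_setOf_eq, mem_Icc]
      constructor
      · intro h j hj
        rw [hm']
        simp only []
        rw [dif_pos hj]
        have h2 := h ⟨j - 1, by omega⟩
        have hj1 : j - 1 + 1 = j := by omega
        simpa [hj1] using h2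
      · intro h i
        have hik : (i : ℕ) < k := i.isLt
        have h2 := h ((i : ℕ) + 1) ⟨by omega, by omega⟩
        rw [hm'] at h2
        simp only [] at h2
        rw [dif_pos (⟨by omega, by omega⟩ : 1 ≤ (i : ℕ) + 1 ∧ (i : ℕ) + 1 ≤ k)] at h2
        have hfin : (⟨(i : ℕ) + 1 - 1, by omega⟩ : Fin k) = i := by ext; simp
        rwa [hfin] at h2
    rw [hsetL, htail n hN m']
    have hpre : (fun x => fun i : Fin k => ⌊θ i * x i / jc A k n ((i : ℕ) + 1)⌋₊) ⁻¹' tailSet m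
        = Set.pi Set.univ fun i : Fin k =>
            {y : ℝ | m i ≤ ⌊θ i * y / jc A k n ((i : ℕ) + 1)⌋₊} := by
      ext x
      simp [tailSet, Set.mem_pi]
    rw [hpre, hπdef, Measure.pi_pi]
    have hfac : ∀ i : Fin k,
        expMeasure (θ i) {y : ℝ | m i ≤ ⌊θ i * y / jc A k n ((i : ℕ) + 1)⌋₊}
          = ENNReal.ofReal (jrho A k n ((i : ℕ) + 1) ^ m i) := by
      intro i
      obtain ⟨hcpos, hrpos⟩ := hgd i
      rcases Nat.eq_zero_or_pos (m i) with h0 | hpos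
      · rw [h0]
        have huniv : {y : ℝ | 0 ≤ ⌊θ i * y / jc A k n ((i : ℕ) + 1)⌋₊} = Set.univ := by
          ext y; simp
        rw [huniv, measure_univ, pow_zero, ENNReal.ofReal_one]
      · have hset : {y : ℝ | m i ≤ ⌊θ i * y / jc A k n ((i : ℕ) + 1)⌋₊}
            = {y : ℝ | (m i : ℝ) * jc A k n ((i : ℕ) + 1) / θ i ≤ y} := by
          ext y
          simp only [Set.mem_setOf_eq]
          rw [Nat.le_floor_iff' hpos.ne', div_le_iff₀ (hθ i), le_div_iff₀ hcpos]
          constructor <;> intro h <;> nlinarith [h]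
        have ht0 : 0 ≤ (m i : ℝ) * jc A k n ((i : ℕ) + 1) / θ i :=
          div_nonneg (mul_nonneg (Nat.cast_nonneg _) hcpos.le) (hθ i).le
        rw [hset, expMeasure_tail (hθ i) ht0]
        congr 1
        have hθne : θ i ≠ 0 := (hθ i).ne'
        have harg : -(θ i * ((m i : ℝ) * jc A k n ((i : ℕ) + 1) / θ i))
            = (m i : ℝ) * Real.log (jrho A k n ((i : ℕ) + 1)) := by
          rw [jc]
          field_simp
        rw [harg, Real.exp_nat_mul, Real.exp_log hrpos]
    have hR : ∏ i : Fin k, expMeasure (θ i) {y : ℝ | m i ≤ ⌊θ i * y / jc A k n ((i : ℕ) + 1)⌋₊}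
        = ∏ i : Fin k, ENNReal.ofReal (jrho A k n ((i : ℕ) + 1) ^ m i) :=
      Finset.prod_congr rfl fun i _ => hfac i
    rw [hR]
    have hmm : ∀ i : Fin k, m' ((i : ℕ) + 1) = m i := by
      intro i
      have hik : (i : ℕ) < k := i.isLt
      rw [hm']
      simp only []
      rw [dif_pos (⟨by omega, by omega⟩ : 1 ≤ (i : ℕ) + 1 ∧ (i : ℕ) + 1 ≤ k)]
      exact congrArg m (by ext; simp)
    calc ∏ i ∈ Icc 1 k, ENNReal.ofReal ((∏ j ∈ Icc i k, (1 - A j / Real.sqrt n)) ^ m' i)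
        = ∏ i ∈ range k, ENNReal.ofReal (jrho A k n (1 + i) ^ m' (1 + i)) := by
          rw [← Finset.Ico_add_one_right_eq_Icc, Finset.prod_Ico_eq_prod_range]
          simp [jrho]
      _ = ∏ i : Fin k, ENNReal.ofReal (jrho A k n ((i : ℕ) + 1) ^ m i) := by
          rw [← Fin.prod_univ_eq_prod_range
            (fun j => ENNReal.ofReal (jrho A k n (1 + j) ^ m' (1 + j))) k]
          refine Finset.prod_congr rfl fun i _ => ?_
          rw [add_comm 1 (i : ℕ), hmm i]
  -- change of variables for good n
  have hint : ∀ n : ℕ, N₀ ≤ n → (0:ℝ) < Real.sqrt n →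
      (∀ i : Fin k, 0 < jc A k n ((i : ℕ) + 1) ∧ 0 < jrho A k n ((i : ℕ) + 1)) →
      ∫ ω, f (fun i => (Q n ((i : ℕ) + 1) ω : ℝ) / Real.sqrt n) ∂μ
        = ∫ x, f (fun i => (⌊θ i * x i / jc A k n ((i : ℕ) + 1)⌋₊ : ℝ) / Real.sqrt n) ∂π := by
    intro n h1 h2 h3
    have hψ : Measurable (fun v : Fin k → ℕ => fun i : Fin k => (v i : ℝ) / Real.sqrt n) :=
      measurable_pi_lambda _ fun i =>
        (measurable_from_nat.comp (measurable_pi_apply i)).div_const _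
    have hfm1 : AEStronglyMeasurable
        (fun v : Fin k → ℕ => f (fun i => (v i : ℝ) / Real.sqrt n))
        (μ.map (fun ω => fun i : Fin k => Q n ((i : ℕ) + 1) ω)) :=
      (f.continuous.measurable.comp hψ).aestronglyMeasurable
    have hfm2 : AEStronglyMeasurable
        (fun v : Fin k → ℕ => f (fun i => (v i : ℝ) / Real.sqrt n))
        (π.map (fun x => fun i : Fin k => ⌊θ i * x i / jc A k n ((i : ℕ) + 1)⌋₊)) :=
      (f.continuous.measurable.comp hψ).aestronglyMeasurable
    calc ∫ ω, f (fun i => (Q n ((i : ℕ) + 1) ω : ℝ) / Real.sqrt n) ∂μ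
        = ∫ v, f (fun i => (v i : ℝ) / Real.sqrt n)
            ∂(μ.map (fun ω => fun i : Fin k => Q n ((i : ℕ) + 1) ω)) :=
          (integral_map (hφ n).aemeasurable hfm1).symm
      _ = ∫ v, f (fun i => (v i : ℝ) / Real.sqrt n)
            ∂(π.map (fun x => fun i : Fin k => ⌊θ i * x i / jc A k n ((i : ℕ) + 1)⌋₊)) := by
          rw [hmap n h1 h2 h3]
      _ = ∫ x, f (fun i => (⌊θ i * x i / jc A k n ((i : ℕ) + 1)⌋₊ : ℝ) / Real.sqrt n) ∂π :=
          integral_map (hG n).aemeasurable hfm2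
  -- dominated convergence
  have hlim : Tendsto (fun n : ℕ =>
      ∫ x, f (fun i => (⌊θ i * x i / jc A k n ((i : ℕ) + 1)⌋₊ : ℝ) / Real.sqrt n) ∂π)
      atTop (𝓝 (∫ x, f x ∂π)) := by
    refine tendsto_integral_of_dominated_convergence (fun _ => ‖f‖) ?_ (integrable_const _)
      ?_ ?_
    · intro n
      have hGm : Measurable (fun x : Fin k → ℝ =>
          fun i : Fin k => (⌊θ i * x i / jc A k n ((i : ℕ) + 1)⌋₊ : ℝ) / Real.sqrt n) :=
        measurable_pi_lambda _ fun i =>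
          (measurable_from_nat.comp
            ((((measurable_pi_apply (X := fun _ : Fin k => ℝ) i).const_mul (θ i)).div_const _).nat_floor)).div_const _
      exact (f.continuous.measurable.comp hGm).aestronglyMeasurable
    · intro n
      exact Eventually.of_forall fun x => f.norm_coe_le_norm _
    · have hae : ∀ᵐ x ∂π, ∀ i : Fin k, 0 ≤ x i := by
        rw [ae_all_iff]
        intro i
        rw [ae_iff]
        have hs : {x : Fin k → ℝ | ¬ 0 ≤ x i} = (fun x : Fin k → ℝ => x i) ⁻¹' Set.Iio 0 := by
          ext x; simp [not_le]
        rw [hs, hπdef]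
        exact Measure.pi_eval_preimage_null _ expMeasure_Iio_zero
      filter_upwards [hae] with x hx
      refine (f.continuous.tendsto x).comp ?_
      rw [tendsto_pi_nhds]
      intro i
      have hU : Tendsto (fun n : ℕ => θ i * x i / (Real.sqrt n * jc A k n ((i : ℕ) + 1)))
          atTop (𝓝 (x i)) := by
        have h := (tendsto_const_nhds
            (x := θ i * x i) (f := atTop (α := ℕ))).div (hc i) (hθ i).ne'
        simpa [Pi.div_def, mul_div_cancel_left₀ _ (hθ i).ne'] using h
      have hL : Tendsto (fun n : ℕ =>
          θ i * x i / (Real.sqrt n * jc A k n ((i : ℕ) + 1)) - 1 / Real.sqrt n)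
          atTop (𝓝 (x i)) := by
        have hz : Tendsto (fun n : ℕ => 1 / Real.sqrt n) atTop (𝓝 0) :=
          tendsto_const_nhds.div_atTop sqrt_nat_atTop
        simpa using hU.sub hz
      refine tendsto_of_tendsto_of_tendsto_of_le_of_le' hL hU ?_ ?_
      · filter_upwards [hgood] with n hn
        obtain ⟨-, hs, hcr⟩ := hn
        obtain ⟨hcp, -⟩ := hcr i
        have hfl := Nat.sub_one_lt_floor (θ i * x i / jc A k n ((i : ℕ) + 1))
        have h1 : θ i * x i / (Real.sqrt n * jc A k n ((i : ℕ) + 1)) - 1 / Real.sqrt n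
            = (θ i * x i / jc A k n ((i : ℕ) + 1) - 1) / Real.sqrt n := by
          rw [sub_div, div_div, mul_comm (jc A k n ((i : ℕ) + 1))]
        rw [h1]
        gcongr
      · filter_upwards [hgood] with n hn
        obtain ⟨-, hs, hcr⟩ := hn
        obtain ⟨hcp, -⟩ := hcr i
        have hy : (0:ℝ) ≤ θ i * x i / jc A k n ((i : ℕ) + 1) :=
          div_nonneg (mul_nonneg (hθ i).le (hx i)) hcp.le
        have h2 : θ i * x i / (Real.sqrt n * jc A k n ((i : ℕ) + 1))
            = (θ i * x i / jc A k n ((i : ℕ) + 1)) / Real.sqrt n := by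
          rw [div_div, mul_comm (Real.sqrt (n:ℝ))]
        rw [h2]
        gcongr
        exact Nat.floor_le hy
  refine hlim.congr' ?_
  filter_upwards [hgood] with n hn
  exact (hint n hn.1 hn.2.1 hn.2.2).symm
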